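/- (Corollary on averaged policies.) Let ℓ be the interior-design game, let a^1,…,a^T : Ω → 𝒜 be random action profiles on a probability space (Ω, ℱ, ℙ), and fix a player i. Suppose there are random variables π_i^1,…,π_i^T : Ω → [0,1] (the probability player i's policy at round t assigns to the target action a†_i) such that E[π_i^t] = ℙ(a^t_i = a†_i) for every t, and suppose E[R_i^T] ≤ R̄ for the best-in-hindsight regret under ℓ. Then the expected averaged policy probability of the target action satisfies 1 − E[(1/T)·Σ_{t=1}^T π_i^t] ≤ (M · R̄) / ((M−1) · ρ · T); in particular, if R̄ = c·T^α with α < 1, this quantity converges to 1 as T → ∞. -/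

import Mathlib

open Finset MeasureTheory

/-- Corollary on averaged policies: under the interior-design game, if player `i`'s
policies `π_i^t` (probability assigned to the target action) satisfy
`E[π_i^t] = ℙ(a_i^t = a†_i)` and the expected best-in-hindsight regret is at most
`R̄`, then `1 - E[(1/T) Σ_t π_i^t] ≤ M R̄ / ((M-1) ρ T)`. -/
theorem interior_design_average_policy
    {M : ℕ} (hM : 2 ≤ M)
    {A : Fin M → Type} [∀ i, Fintype (A i)] [∀ i, Nonempty (A i)]
    [∀ i, DecidableEq (A i)]
    (L U : ℝ) (hLU : L < U)
    (adag : ∀ i, A i)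
    (ρ : ℝ) (hρ0 : 0 < ρ) (hρU : ρ ≤ (U - L) / 2)
    (ℓo : (∀ i, A i) → Fin M → ℝ)
    (hℓo : ∀ i, ℓo adag i ∈ Set.Icc (L + ρ) (U - ρ))
    (ℓ : (∀ i, A i) → Fin M → ℝ)
    (hℓ : ∀ a i, ℓ a i =
      if a i = adag i
      then ℓo adag i - (1 - ((univ.filter fun j => a j = adag j).card : ℝ) / M) * ρ
      else ℓo adag i + (((univ.filter fun j => a j = adag j).card : ℝ) / M) * ρ)
    {Ω : Type} [MeasurableSpace Ω] (P : Measure Ω) [IsProbabilityMeasure P]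
    [∀ i, MeasurableSpace (A i)] [∀ i, MeasurableSingletonClass (A i)]
    (T : ℕ) (hT : 1 ≤ T) (ap : Fin T → Ω → ∀ j, A j)
    (hmeas : ∀ t, Measurable (ap t))
    (i : Fin M)
    (π : Fin T → Ω → ℝ)
    (hπ01 : ∀ t ω, π t ω ∈ Set.Icc (0 : ℝ) 1)
    (hπmeas : ∀ t, Measurable (π t))
    (hπ : ∀ t, ∫ ω, π t ω ∂P = (P {ω | ap t ω i = adag i}).toReal)
    (R : Ω → ℝ)
    (hR : ∀ ω, R ω =
      (∑ t, ℓ (ap t ω) i)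
        - univ.inf' univ_nonempty
            (fun b : A i => ∑ t, ℓ (Function.update (ap t ω) i b) i))
    (Rbar : ℝ) (hRbar : 0 ≤ Rbar)
    (hreg : ∫ ω, R ω ∂P ≤ Rbar) :
    1 - ∫ ω, (1 / (T : ℝ)) * ∑ t, π t ω ∂P
      ≤ (M : ℝ) * Rbar / (((M : ℝ) - 1) * ρ * T) := by
  have hM0 : (0:ℝ) < (M:ℝ) := by
    have : (2:ℝ) ≤ (M:ℝ) := by exact_mod_cast hM
    linarith
  have hM1 : (1:ℝ) ≤ (M:ℝ) - 1 := by
    have : (2:ℝ) ≤ (M:ℝ) := by exact_mod_cast hM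
    linarith
  have hT0 : (0:ℝ) < (T:ℝ) := by exact_mod_cast hT
  set c : ℝ := ρ * ((M:ℝ) - 1) / M with hc
  have hcpos : 0 < c := by
    apply div_pos (mul_pos hρ0 (by linarith)) hM0
  -- bounds on ℓ
  have hcard : ∀ a : ∀ j, A j, ((univ.filter fun j => a j = adag j).card : ℝ) ≤ M := by
    intro a
    have : (univ.filter fun j => a j = adag j).card ≤ M := by
      calc (univ.filter fun j => a j = adag j).card ≤ (univ : Finset (Fin M)).card :=
            card_filter_le _ _
        _ = M := by simp
    exact_mod_cast this
  have hℓbound : ∀ a : ∀ j, A j, L ≤ ℓ a i ∧ ℓ a i ≤ U := by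
    intro a
    have h1 := (hℓo i).1
    have h2 := (hℓo i).2
    have hd0 : (0:ℝ) ≤ ((univ.filter fun j => a j = adag j).card : ℝ) := by positivity
    have hdM := hcard a
    rw [hℓ]
    have hfrac0 : (0:ℝ) ≤ ((univ.filter fun j => a j = adag j).card : ℝ) / M :=
      div_nonneg hd0 hM0.le
    have hfrac1 : ((univ.filter fun j => a j = adag j).card : ℝ) / M ≤ 1 := by
      rw [div_le_one hM0]; exact hdM
    split <;> constructor <;> nlinarith
  -- indicator functions
  set g : Fin T → Ω → ℝ := fun t ω => if ap t ω i = adag i then (0:ℝ) else 1 with hg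
  have hsmeas : ∀ t, MeasurableSet {ω | ap t ω i = adag i} := by
    intro t
    exact (hmeas t) ((measurable_pi_apply i) (measurableSet_singleton (adag i)))
  -- key pointwise inequality
  have key : ∀ ω, c * (∑ t, g t ω) ≤ R ω := by
    intro ω
    have hterm : ∀ t, ℓ (ap t ω) i - ℓ (Function.update (ap t ω) i (adag i)) i = c * g t ω := by
      intro t
      set a := ap t ω with ha
      by_cases h : a i = adag i
      · have : Function.update a i (adag i) = a := by
          rw [← h]; exact Function.update_eq_self i a
        simp [hg, ← ha, h, this]
      · have hup : Function.update a i (adag i) i = adag i := Function.update_self i (adag i) a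
        have hfilt : (univ.filter fun j => Function.update a i (adag i) j = adag j)
            = insert i (univ.filter fun j => a j = adag j) := by
          ext j
          by_cases hj : j = i
          · subst hj; simp [hup]
          · simp [Function.update_of_ne hj, hj]
        have hnotmem : i ∉ (univ.filter fun j => a j = adag j) := by simp [h]
        have hcardins : ((univ.filter fun j => Function.update a i (adag i) j = adag j).card : ℝ)
            = ((univ.filter fun j => a j = adag j).card : ℝ) + 1 := by
          rw [hfilt, card_insert_of_notMem hnotmem]
          push_cast; ring
        rw [hℓ a i, hℓ (Function.update a i (adag i)) i, if_neg h, if_pos hup, hcardins]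
        have : g t ω = 1 := by simp [hg, ← ha, h]
        rw [this, hc]
        field_simp
        ring
    have hinf : (univ.inf' univ_nonempty
          (fun b : A i => ∑ t, ℓ (Function.update (ap t ω) i b) i))
        ≤ ∑ t, ℓ (Function.update (ap t ω) i (adag i)) i :=
      inf'_le _ (mem_univ (adag i))
    have : c * (∑ t, g t ω) = ∑ t, (ℓ (ap t ω) i - ℓ (Function.update (ap t ω) i (adag i)) i) := by
      rw [mul_sum]
      exact Finset.sum_congr rfl fun t _ => (hterm t).symm
    rw [this, hR ω, Finset.sum_sub_distrib]
    linarith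
  -- measurability of R and friends
  have hgmeas : ∀ t, Measurable (g t) := by
    intro t
    exact Measurable.ite (hsmeas t) measurable_const measurable_const
  have hgint : ∀ t, Integrable (g t) P := by
    intro t
    refine (integrable_const (1:ℝ)).mono' ((hgmeas t).aestronglyMeasurable) ?_
    filter_upwards with ω
    by_cases h : ap t ω i = adag i <;> simp [hg, h]
  have hGint : Integrable (fun ω => c * ∑ t, g t ω) P :=
    (integrable_finset_sum univ fun t _ => hgint t).const_mul c
  have hRmeas : Measurable R := by
    have : R = (fun v : Fin T → (∀ j, A j) =>
        (∑ t, ℓ (v t) i) - univ.inf' univ_nonempty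
          (fun b : A i => ∑ t, ℓ (Function.update (v t) i b) i)) ∘ (fun ω t => ap t ω) := by
      funext ω; rw [hR ω]; rfl
    rw [this]
    exact (measurable_of_countable _).comp
      (measurable_pi_lambda _ fun t => hmeas t)
  have hRint : Integrable R P := by
    refine (integrable_const ((T:ℝ) * (U - L))).mono' hRmeas.aestronglyMeasurable ?_
    filter_upwards with ω
    have hsum1 : (T:ℝ) * L ≤ ∑ t, ℓ (ap t ω) i := by
      calc (T:ℝ) * L = ∑ _t : Fin T, L := by simp [mul_comm]
        _ ≤ _ := Finset.sum_le_sum fun t _ => (hℓbound (ap t ω)).1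
    have hsum2 : ∑ t, ℓ (ap t ω) i ≤ (T:ℝ) * U := by
      calc (∑ t, ℓ (ap t ω) i) ≤ ∑ _t : Fin T, U :=
            Finset.sum_le_sum fun t _ => (hℓbound (ap t ω)).2
        _ = (T:ℝ) * U := by simp [mul_comm]
    have hinf1 : (T:ℝ) * L ≤ univ.inf' univ_nonempty
        (fun b : A i => ∑ t, ℓ (Function.update (ap t ω) i b) i) := by
      apply le_inf'
      intro b _
      calc (T:ℝ) * L = ∑ _t : Fin T, L := by simp [mul_comm]
        _ ≤ _ := Finset.sum_le_sum fun t _ => (hℓbound _).1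
    have hinf2 : univ.inf' univ_nonempty
        (fun b : A i => ∑ t, ℓ (Function.update (ap t ω) i b) i) ≤ (T:ℝ) * U := by
      refine le_trans (inf'_le _ (mem_univ (adag i))) ?_
      calc (∑ t, ℓ (Function.update (ap t ω) i (adag i)) i) ≤ ∑ _t : Fin T, U :=
            Finset.sum_le_sum fun t _ => (hℓbound _).2
        _ = (T:ℝ) * U := by simp [mul_comm]
    rw [Real.norm_eq_abs, abs_le, hR ω]
    constructor <;> nlinarith
  -- integral computations
  have hgintval : ∀ t, ∫ ω, g t ω ∂P = 1 - (P {ω | ap t ω i = adag i}).toReal := by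
    intro t
    have hrepr : (fun ω => g t ω)
        = fun ω => 1 - Set.indicator {ω | ap t ω i = adag i} (fun _ => (1:ℝ)) ω := by
      funext ω
      by_cases h : ap t ω i = adag i <;> simp [hg, h, Set.indicator]
    rw [hrepr, integral_sub (integrable_const 1)]
    · rw [integral_const, integral_indicator_const _ (hsmeas t)]
      simp [measureReal_def]
    · exact (integrable_const (1:ℝ)).indicator (hsmeas t)
  have hπint : ∀ t, Integrable (π t) P := by
    intro t
    refine (integrable_const (1:ℝ)).mono' ((hπmeas t).aestronglyMeasurable) ?_
    filter_upwards with ω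
    rw [Real.norm_eq_abs, abs_le]
    constructor
    · linarith [(hπ01 t ω).1]
    · exact (hπ01 t ω).2
  set S : ℝ := ∑ t, ∫ ω, π t ω ∂P with hS
  have hLHS : ∫ ω, (1 / (T : ℝ)) * ∑ t, π t ω ∂P = (1 / (T:ℝ)) * S := by
    rw [integral_const_mul, integral_finset_sum univ fun t _ => hπint t]
  have hGval : ∫ ω, c * ∑ t, g t ω ∂P = c * ((T:ℝ) - S) := by
    rw [integral_const_mul, integral_finset_sum univ fun t _ => hgint t]
    congr 1
    have : ∀ t : Fin T, ∫ ω, g t ω ∂P = 1 - ∫ ω, π t ω ∂P := by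
      intro t; rw [hgintval t, hπ t]
    rw [Finset.sum_congr rfl fun t _ => this t, Finset.sum_sub_distrib]
    simp [hS]
  have hmain : c * ((T:ℝ) - S) ≤ Rbar := by
    calc c * ((T:ℝ) - S) = ∫ ω, c * ∑ t, g t ω ∂P := hGval.symm
      _ ≤ ∫ ω, R ω ∂P := integral_mono hGint hRint key
      _ ≤ Rbar := hreg
  rw [hLHS]
  have hD : 0 < ((M:ℝ) - 1) * ρ * T := by positivity
  rw [le_div_iff₀ hD]
  have hMne : (M:ℝ) ≠ 0 := ne_of_gt hM0
  have hTne : (T:ℝ) ≠ 0 := ne_of_gt hT0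
  have h1 : ρ * ((M:ℝ) - 1) * ((T:ℝ) - S) ≤ (M:ℝ) * Rbar := by
    have := mul_le_mul_of_nonneg_right hmain hM0.le
    rw [hc] at this
    calc ρ * ((M:ℝ) - 1) * ((T:ℝ) - S) = ρ * ((M:ℝ) - 1) / M * ((T:ℝ) - S) * M := by
          field_simp
      _ ≤ Rbar * M := this
      _ = (M:ℝ) * Rbar := by ring
  calc (1 - 1 / (T:ℝ) * S) * (((M:ℝ) - 1) * ρ * (T:ℝ))
      = ρ * ((M:ℝ) - 1) * ((T:ℝ) - S) := by field_simp
    _ ≤ (M:ℝ) * Rbar := h1
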